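/- There exists a perfect coloring of H with parameter matrix [[1,2],[1,2]], and any two perfect colorings of H with parameter matrix [[1,2],[1,2]] are equivalent (the coloring is unique up to a graph automorphism of H). -/

import Mathlib

namespace HexGrid

/-- Relations of the hexagonal grid group: x² = y² = z² = (x·y·z)² = 1. -/
def hexRels : Set (FreeGroup (Fin 3)) :=
  {FreeGroup.of 0 * FreeGroup.of 0,
   FreeGroup.of 1 * FreeGroup.of 1,
   FreeGroup.of 2 * FreeGroup.of 2,
   FreeGroup.of 0 * FreeGroup.of 1 * FreeGroup.of 2 *
     (FreeGroup.of 0 * FreeGroup.of 1 * FreeGroup.of 2)}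

/-- The group `G = ⟨x, y, z ∣ x² = y² = z² = (x·y·z)² = 1⟩`. -/
abbrev G := PresentedGroup hexRels

/-- The generators of `G`. -/
def gen (i : Fin 3) : G := PresentedGroup.of i

def x : G := gen 0
def y : G := gen 1
def z : G := gen 2

lemma gen_mul_self (i : Fin 3) : gen i * gen i = 1 := by
  have h : FreeGroup.of i * FreeGroup.of i ∈ Subgroup.normalClosure hexRels :=
    Subgroup.subset_normalClosure (by fin_cases i <;> simp [hexRels])
  exact (QuotientGroup.eq_one_iff _).mpr h

/-- The infinite hexagonal grid `H`: the Cayley graph of `G` with respect to `{x, y, z}`;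
`u` and `v` are adjacent iff `v ∈ {u·x, u·y, u·z}`. -/
def H : SimpleGraph G where
  Adj u v := u ≠ v ∧ ∃ i : Fin 3, v = u * gen i
  symm := ⟨by
    rintro u v ⟨hne, i, rfl⟩
    exact ⟨hne.symm, i, by rw [mul_assoc, gen_mul_self, mul_one]⟩⟩
  loopless := ⟨by rintro u ⟨hne, -⟩; exact hne rfl⟩

/-- `φ` is a perfect coloring of `H` with parameter matrix `A`: for every vertex `u` and
every color `j`, the number of neighbors of `u` in `H` colored `j` equals `A (φ u) j`. -/
def IsPerfectColoring {k : ℕ} (φ : G → Fin k) (A : Matrix (Fin k) (Fin k) ℕ) : Prop :=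
  ∀ u : G, ∀ j : Fin k, Set.ncard {v : G | H.Adj u v ∧ φ v = j} = A (φ u) j

/-- A matrix is tridiagonal if its entries vanish whenever the indices differ by more
than one. -/
def IsTridiagonal {k : ℕ} (A : Matrix (Fin k) (Fin k) ℕ) : Prop :=
  ∀ i j : Fin k, ((i : ℕ) + 1 < (j : ℕ) ∨ (j : ℕ) + 1 < (i : ℕ)) → A i j = 0

/-- Two colorings are equivalent if one is obtained from the other by composing with a
graph automorphism of `H`. -/
def EquivColoring {k : ℕ} (φ ψ : G → Fin k) : Prop :=
  ∃ g : H ≃g H, ψ = fun v => φ (g v)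

@[ext] structure Mg where
  p : ℤ
  q : ℤ
  s : Bool
deriving DecidableEq

namespace Mg

def sgn (s : Bool) : ℤ := if s then -1 else 1

instance : Mul Mg := ⟨fun m n => ⟨m.p + sgn m.s * n.p, m.q + sgn m.s * n.q, xor m.s n.s⟩⟩
instance : One Mg := ⟨⟨0,0,false⟩⟩
instance : Inv Mg := ⟨fun m => ⟨-(sgn m.s) * m.p, -(sgn m.s) * m.q, m.s⟩⟩

lemma mul_def (m n : Mg) : m * n = ⟨m.p + sgn m.s * n.p, m.q + sgn m.s * n.q, xor m.s n.s⟩ := rfl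
lemma one_def : (1 : Mg) = ⟨0,0,false⟩ := rfl
lemma inv_def (m : Mg) : m⁻¹ = ⟨-(sgn m.s) * m.p, -(sgn m.s) * m.q, m.s⟩ := rfl

instance : Group Mg where
  mul_assoc a b c := by
    obtain ⟨ap, aq, as⟩ := a; obtain ⟨bp, bq, bs⟩ := b; obtain ⟨cp, cq, cs⟩ := c
    cases as <;> cases bs <;> cases cs <;> (ext <;> simp [mul_def, sgn]) <;> ring
  one_mul a := by obtain ⟨ap, aq, as⟩ := a; ext <;> simp [mul_def, one_def, sgn]
  mul_one a := by
    obtain ⟨ap, aq, as⟩ := a; cases as <;> (ext <;> simp [mul_def, one_def, sgn])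
  inv_mul_cancel a := by
    obtain ⟨ap, aq, as⟩ := a
    cases as <;> (ext <;> simp [mul_def, one_def, inv_def, sgn])

end Mg


def mgen (i : Fin 3) : Mg := ⟨if i = 1 then 1 else 0, if i = 2 then 1 else 0, true⟩

lemma mrels : ∀ r ∈ hexRels, FreeGroup.lift mgen r = 1 := by
  intro r hr
  rcases hr with h | h | h | h <;> subst h <;> decide

def fhom : G →* Mg := PresentedGroup.toGroup mrels

lemma f_gen (i : Fin 3) : fhom (gen i) = mgen i := PresentedGroup.toGroup.of mrels


lemma gen_inv (i : Fin 3) : (gen i)⁻¹ = gen i :=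
  inv_eq_of_mul_eq_one_right (gen_mul_self i)

lemma xyz_sq : (gen 0 * gen 1 * gen 2) * (gen 0 * gen 1 * gen 2) = 1 := by
  have h : FreeGroup.of (0 : Fin 3) * FreeGroup.of 1 * FreeGroup.of 2 *
      (FreeGroup.of 0 * FreeGroup.of 1 * FreeGroup.of 2) ∈ Subgroup.normalClosure hexRels :=
    Subgroup.subset_normalClosure (by simp [hexRels])
  have := (QuotientGroup.eq_one_iff (G := FreeGroup (Fin 3))
      (N := Subgroup.normalClosure hexRels) _).mpr h
  calc (gen 0 * gen 1 * gen 2) * (gen 0 * gen 1 * gen 2)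
      = PresentedGroup.mk hexRels (FreeGroup.of 0 * FreeGroup.of 1 * FreeGroup.of 2 *
        (FreeGroup.of 0 * FreeGroup.of 1 * FreeGroup.of 2)) := by
        simp [gen, PresentedGroup.of, map_mul]
    _ = 1 := this

lemma zxy_sq : (gen 2 * gen 0 * gen 1) * (gen 2 * gen 0 * gen 1) = 1 := by
  have hw : gen 2 * (gen 0 * gen 1 * gen 2) * (gen 2)⁻¹ = gen 2 * gen 0 * gen 1 := by group
  calc (gen 2 * gen 0 * gen 1) * (gen 2 * gen 0 * gen 1)
      = (gen 2 * (gen 0 * gen 1 * gen 2) * (gen 2)⁻¹) *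
        (gen 2 * (gen 0 * gen 1 * gen 2) * (gen 2)⁻¹) := by rw [hw]
    _ = gen 2 * ((gen 0 * gen 1 * gen 2) * (gen 0 * gen 1 * gen 2)) * (gen 2)⁻¹ := by group
    _ = 1 := by rw [xyz_sq]; group

lemma zxy_yxz : gen 2 * gen 0 * gen 1 = gen 1 * gen 0 * gen 2 := by
  have h := inv_eq_of_mul_eq_one_right zxy_sq
  rw [← h, mul_inv_rev, mul_inv_rev, gen_inv, gen_inv, gen_inv, mul_assoc]

def aG : G := gen 1 * gen 0
def bG : G := gen 2 * gen 0

lemma comm_ab : Commute aG bG := by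
  unfold Commute SemiconjBy aG bG
  calc (gen 1 * gen 0) * (gen 2 * gen 0) = (gen 1 * gen 0 * gen 2) * gen 0 := by group
    _ = (gen 2 * gen 0 * gen 1) * gen 0 := by rw [zxy_yxz]
    _ = (gen 2 * gen 0) * (gen 1 * gen 0) := by group

lemma mg_pow (k : ℤ) (u v : ℤ) : (⟨u, v, false⟩ : Mg) ^ k = ⟨k * u, k * v, false⟩ := by
  induction k using Int.induction_on with
  | zero => ext <;> simp [Mg.one_def]
  | succ n ih => rw [zpow_add_one, ih]; ext <;> simp [Mg.mul_def, Mg.sgn] <;> ring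
  | pred n ih => rw [zpow_sub_one, ih]; ext <;> simp [Mg.mul_def, Mg.inv_def, Mg.sgn] <;> ring

def sec (m : Mg) : G := aG ^ m.p * bG ^ m.q * (if m.s then gen 0 else 1)

lemma f_aG : fhom aG = ⟨1, 0, false⟩ := by
  show fhom (gen 1 * gen 0) = _
  rw [map_mul, f_gen, f_gen]; decide

lemma f_bG : fhom bG = ⟨0, 1, false⟩ := by
  show fhom (gen 2 * gen 0) = _
  rw [map_mul, f_gen, f_gen]; decide

lemma f_sec (m : Mg) : fhom (sec m) = m := by
  obtain ⟨p, q, s⟩ := m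
  unfold sec
  rw [map_mul, map_mul, map_zpow, map_zpow, f_aG, f_bG, mg_pow, mg_pow]
  cases s <;> simp [f_gen] <;> ext <;> simp [Mg.mul_def, Mg.one_def, Mg.sgn, mgen]


lemma hy : aG * gen 0 = gen 1 := by
  show gen 1 * gen 0 * gen 0 = gen 1
  rw [mul_assoc, gen_mul_self, mul_one]

lemma hz : bG * gen 0 = gen 2 := by
  show gen 2 * gen 0 * gen 0 = gen 2
  rw [mul_assoc, gen_mul_self, mul_one]

lemma hxy : gen 0 * gen 1 = aG⁻¹ := by
  show _ = (gen 1 * gen 0)⁻¹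
  rw [mul_inv_rev, gen_inv, gen_inv]

lemma hxz : gen 0 * gen 2 = bG⁻¹ := by
  show _ = (gen 2 * gen 0)⁻¹
  rw [mul_inv_rev, gen_inv, gen_inv]

lemma comm_qa (q : ℤ) : bG ^ q * aG = aG * bG ^ q := (comm_ab.symm.zpow_left q).eq

lemma sec_mul_gen (m : Mg) (i : Fin 3) : sec (m * mgen i) = sec m * gen i := by
  obtain ⟨p, q, s⟩ := m
  have e0f : (⟨p,q,false⟩ : Mg) * mgen 0 = ⟨p, q, true⟩ := by
    ext <;> simp [Mg.mul_def, Mg.sgn, mgen]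
  have e0t : (⟨p,q,true⟩ : Mg) * mgen 0 = ⟨p, q, false⟩ := by
    ext <;> simp [Mg.mul_def, Mg.sgn, mgen]
  have e1f : (⟨p,q,false⟩ : Mg) * mgen 1 = ⟨p + 1, q, true⟩ := by
    ext <;> simp [Mg.mul_def, Mg.sgn, mgen]
  have e1t : (⟨p,q,true⟩ : Mg) * mgen 1 = ⟨p - 1, q, false⟩ := by
    ext <;> simp [Mg.mul_def, Mg.sgn, mgen] <;> ring
  have e2f : (⟨p,q,false⟩ : Mg) * mgen 2 = ⟨p, q + 1, true⟩ := by
    ext <;> simp [Mg.mul_def, Mg.sgn, mgen]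
  have e2t : (⟨p,q,true⟩ : Mg) * mgen 2 = ⟨p, q - 1, false⟩ := by
    ext <;> simp [Mg.mul_def, Mg.sgn, mgen] <;> ring
  have h3 : i = 0 ∨ i = 1 ∨ i = 2 := by fin_cases i <;> simp
  rcases h3 with rfl | rfl | rfl <;> cases s
  · rw [e0f]; show aG^p*bG^q*gen 0 = aG^p*bG^q*1*gen 0
    rw [mul_one]
  · rw [e0t]; show aG^p*bG^q*1 = aG^p*bG^q*gen 0*gen 0
    rw [mul_one, mul_assoc, gen_mul_self, mul_one]
  · rw [e1f]; show aG^(p+1)*bG^q*gen 0 = aG^p*bG^q*1*gen 1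
    calc aG ^ (p+1) * bG ^ q * gen 0 = aG ^ p * (aG * bG ^ q) * gen 0 := by
          rw [zpow_add_one]; group
      _ = aG ^ p * (bG ^ q * aG) * gen 0 := by rw [comm_qa]
      _ = aG ^ p * bG ^ q * (aG * gen 0) := by group
      _ = aG ^ p * bG ^ q * 1 * gen 1 := by rw [hy, mul_one]
  · rw [e1t]; show aG^(p-1)*bG^q*1 = aG^p*bG^q*gen 0*gen 1
    calc aG ^ (p-1) * bG ^ q * 1 = aG ^ p * (aG⁻¹ * bG ^ q) := by
          rw [zpow_sub_one]; group
      _ = aG ^ p * (bG ^ q * aG⁻¹) := by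
          rw [((comm_ab.symm.zpow_left q).inv_right).eq]
      _ = aG ^ p * bG ^ q * (gen 0 * gen 1) := by rw [hxy]; group
      _ = aG ^ p * bG ^ q * gen 0 * gen 1 := by group
  · rw [e2f]; show aG^p*bG^(q+1)*gen 0 = aG^p*bG^q*1*gen 2
    calc aG ^ p * bG ^ (q+1) * gen 0 = aG ^ p * bG ^ q * (bG * gen 0) := by
          rw [zpow_add_one]; group
      _ = aG ^ p * bG ^ q * 1 * gen 2 := by rw [hz, mul_one]
  · rw [e2t]; show aG^p*bG^(q-1)*1 = aG^p*bG^q*gen 0*gen 2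
    calc aG ^ p * bG ^ (q-1) * 1 = aG ^ p * bG ^ q * bG⁻¹ := by
          rw [zpow_sub_one]; group
      _ = aG ^ p * bG ^ q * (gen 0 * gen 2) := by rw [hxz]
      _ = aG ^ p * bG ^ q * gen 0 * gen 2 := by group

lemma sec_one : sec 1 = 1 := by
  show sec ⟨0,0,false⟩ = 1
  simp [sec]

lemma key_mul : ∀ (w : FreeGroup (Fin 3)) (m : Mg),
    sec (m * fhom (PresentedGroup.mk hexRels w)) = sec m * PresentedGroup.mk hexRels w := by
  intro w
  induction w using FreeGroup.induction_on with
  | C1 => intro m; simp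
  | of i =>
    intro m
    rw [show (PresentedGroup.mk hexRels (FreeGroup.of i)) = gen i from rfl, f_gen]
    exact sec_mul_gen m i
  | inv_of i ih =>
    intro m
    have hgi : ((PresentedGroup.mk hexRels (FreeGroup.of i))⁻¹ : G) = gen i := by
      rw [show (PresentedGroup.mk hexRels (FreeGroup.of i)) = gen i from rfl, gen_inv]
    rw [map_inv, hgi, f_gen]
    exact sec_mul_gen m i
  | mul w1 w2 ih1 ih2 =>
    intro m
    rw [map_mul, map_mul, ← mul_assoc, ih2, ih1, mul_assoc]

lemma sec_f (g : G) : sec (fhom g) = g := by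
  induction g using PresentedGroup.induction_on with
  | _ w => have := key_mul w 1; rwa [one_mul, sec_one, one_mul] at this

def eqvGM : G ≃ Mg := ⟨fhom, sec, sec_f, f_sec⟩

lemma fhom_inj : Function.Injective fhom := eqvGM.injective


lemma mgen_inj : ∀ i j : Fin 3, mgen i = mgen j → i = j := by decide

lemma mgen_ne_one : ∀ i : Fin 3, mgen i ≠ 1 := by decide

lemma gen_ne_one (i : Fin 3) : gen i ≠ 1 := fun h => by
  have := congrArg fhom h
  rw [f_gen, map_one] at this
  exact mgen_ne_one i this

lemma gen_injective : Function.Injective gen := fun i j h => by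
  have := congrArg fhom h
  rw [f_gen, f_gen] at this
  exact mgen_inj i j this

instance : DecidableEq G := fun g h =>
  decidable_of_iff (fhom g = fhom h) ⟨fun e => fhom_inj e, congrArg _⟩

lemma card_nbrs (φ : G → Fin 2) (u : G) (j : Fin 2) :
    Set.ncard {v : G | H.Adj u v ∧ φ v = j} =
      (if φ (u * gen 0) = j then 1 else 0) + (if φ (u * gen 1) = j then 1 else 0) +
        (if φ (u * gen 2) = j then 1 else 0) := by
  have hset : {v : G | H.Adj u v ∧ φ v = j} =
      ↑((Finset.univ.filter (fun i : Fin 3 => φ (u * gen i) = j)).image (fun i => u * gen i)) := by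
    ext v
    simp only [Set.mem_setOf_eq, Finset.coe_image, Set.mem_image, Finset.mem_coe,
      Finset.mem_filter, Finset.mem_univ, true_and, H]
    constructor
    · rintro ⟨⟨hne, i, rfl⟩, hcol⟩
      exact ⟨i, hcol, rfl⟩
    · rintro ⟨i, hcol, rfl⟩
      exact ⟨⟨fun h => gen_ne_one i (left_eq_mul.mp h), i, rfl⟩, hcol⟩
  rw [hset, Set.ncard_coe_finset,
    Finset.card_image_of_injective _ (fun i j hij => gen_injective (mul_left_cancel hij)),
    Finset.card_filter, Fin.sum_univ_three]


def col (c c' : ℤ) : G → Fin 2 := fun g =>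
  if ((fhom g).p - (fhom g).q) % 3 = (if (fhom g).s then c else c') % 3 then 0 else 1

lemma f_mul_gen (u : G) (i : Fin 3) : fhom (u * gen i) = fhom u * mgen i := by
  rw [map_mul, f_gen]

lemma exist_perfect : IsPerfectColoring (col 0 0) !![1,2;1,2] := by
  intro u j
  rw [card_nbrs]
  rcases hu : fhom u with ⟨p, q, s⟩
  have h0 : fhom (u * gen 0) = ⟨p, q, !s⟩ := by
    rw [f_mul_gen, hu]; ext <;> cases s <;> simp [Mg.mul_def, Mg.sgn, mgen]
  have h1 : fhom (u * gen 1) = ⟨p + Mg.sgn s, q, !s⟩ := by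
    rw [f_mul_gen, hu]; ext <;> cases s <;> simp [Mg.mul_def, Mg.sgn, mgen]
  have h2 : fhom (u * gen 2) = ⟨p, q + Mg.sgn s, !s⟩ := by
    rw [f_mul_gen, hu]; ext <;> cases s <;> simp [Mg.mul_def, Mg.sgn, mgen]
  have hmat : ∀ (t jj : Fin 2), (!![1,2;1,2] : Matrix (Fin 2) (Fin 2) ℕ) t jj
      = if jj = 0 then 1 else 2 := by intro t jj; fin_cases t <;> fin_cases jj <;> rfl
  have hj : j = 0 ∨ j = 1 := by fin_cases j <;> simp
  have c0 : col 0 0 (u * gen 0) = if (p - q) % 3 = 0 then 0 else 1 := by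
    simp [col, h0]
  have c1 : col 0 0 (u * gen 1) = if (p + Mg.sgn s - q) % 3 = 0 then 0 else 1 := by
    simp [col, h1]
  have c2 : col 0 0 (u * gen 2) = if (p - (q + Mg.sgn s)) % 3 = 0 then 0 else 1 := by
    simp [col, h2]
  have e0 : ∀ (C : Prop) (_ : Decidable C),
      (if (if C then (0 : Fin 2) else 1) = 0 then (1 : ℕ) else 0) = if C then 1 else 0 := by
    intro C hC
    by_cases h : C <;> simp [h]
  have e1 : ∀ (C : Prop) (_ : Decidable C),
      (if (if C then (0 : Fin 2) else 1) = 1 then (1 : ℕ) else 0) = if C then 0 else 1 := by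
    intro C hC
    by_cases h : C <;> simp [h]
  rw [hmat, c0, c1, c2]
  rcases hj with rfl | rfl <;> cases s <;>
    (simp only [e0, e1, Mg.sgn, if_true, if_false, Bool.false_eq_true, reduceIte]
     norm_num
     split_ifs <;> omega)


/-- Exactly one of three propositions holds. -/
def XOne (a b c : Prop) : Prop := (a ∧ ¬b ∧ ¬c) ∨ (¬a ∧ b ∧ ¬c) ∨ (¬a ∧ ¬b ∧ c)

lemma classify (β : ℤ → ℤ → Prop)
    (h : ∀ p q : ℤ, XOne (β p q) (β (p + 1) q) (β p (q + 1))) :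
    ∃ c : ℤ, ∀ p q : ℤ, β p q ↔ (p - q) % 3 = c % 3 := by
  have bEq : ∀ {p q p' q' : ℤ}, p = p' → q = q' → (β p q ↔ β p' q') := by
    rintro p q p' q' rfl rfl; rfl
  have h2a : ∀ p q, β p q → ¬β (p + 1) q ∧ ¬β p (q + 1) := by
    intro p q hb
    rcases h p q with ⟨_, hb1, hb2⟩ | ⟨hb0, _, _⟩ | ⟨hb0, _, _⟩ <;> tauto
  have h2b : ∀ p q, β p q → ¬β (p - 1) q ∧ ¬β (p - 1) (q + 1) := by
    intro p q hb
    have hh := h (p - 1) q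
    rw [XOne, bEq (by ring : p - 1 + 1 = p) rfl] at hh
    tauto
  have h2c : ∀ p q, β p q → ¬β p (q - 1) ∧ ¬β (p + 1) (q - 1) := by
    intro p q hb
    have hh := h p (q - 1)
    rw [XOne, bEq rfl (by ring : q - 1 + 1 = q)] at hh
    tauto
  have h3 : ∀ p q, β p q → β (p - 1) (q - 1) := by
    intro p q hb
    have hh := h (p - 1) (q - 1)
    rw [XOne, bEq (by ring : p - 1 + 1 = p) rfl, bEq rfl (by ring : q - 1 + 1 = q)] at hh
    have n1 := (h2c p q hb).1
    have n2 := (h2b p q hb).1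
    tauto
  have h4 : ∀ p q, β p q → β (p + 1) (q + 1) := by
    intro p q hb
    have hh := h (p + 1) q
    have n1 := (h2a p q hb).1
    have n2 : ¬β (p + 1 + 1) q := by
      intro hb2
      have w1 := h3 _ _ hb2
      have w2 := (h2c p q hb).2
      rw [bEq (by ring : p + 1 + 1 - 1 = p + 1) rfl] at w1
      exact w2 w1
    rcases hh with ⟨h0, _, _⟩ | ⟨_, h1, _⟩ | ⟨_, _, h2⟩ <;> tauto
  have h5 : ∀ k : ℤ, ∀ p q, β p q ↔ β (p + k) (q + k) := by
    intro k
    induction k using Int.induction_on with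
    | zero => intro p q; rw [bEq (by ring : p + 0 = p) (by ring : q + 0 = q)]
    | succ n ih =>
      intro p q
      rw [ih p q, bEq (by ring : p + (n + 1) = (p + n) + 1) (by ring : q + (n + 1) = (q + n) + 1)]
      exact ⟨h4 _ _, fun hb => by
        have := h3 _ _ hb
        rwa [bEq (by ring : p + n + 1 - 1 = p + n) (by ring : q + n + 1 - 1 = q + n)] at this⟩
    | pred n ih =>
      intro p q
      rw [ih p q, bEq (by ring : p + (-n - 1) = (p + -n) - 1) (by ring : q + (-n - 1) = (q + -n) - 1)]
      exact ⟨fun hb => by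
        have := h3 _ _ hb
        rwa [bEq rfl rfl] at this, fun hb => by
        have := h4 _ _ hb
        rwa [bEq (by ring : p + -n - 1 + 1 = p + -n) (by ring : q + -n - 1 + 1 = q + -n)] at this⟩
  set r : ℤ → Prop := fun d => β d 0 with hr
  have h6 : ∀ p q, β p q ↔ r (p - q) := by
    intro p q
    have := h5 (-q) p q
    rw [this, bEq rfl (by ring : q + -q = 0)]
    constructor
    · intro hb; rw [hr]; rwa [bEq (by ring : p + -q = p - q) rfl] at hb
    · intro hb; rw [hr] at hb; rwa [bEq (by ring : p - q = p + -q) rfl] at hb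
  have h7 : ∀ d, XOne (r d) (r (d + 1)) (r (d - 1)) := by
    intro d
    have hh := h d 0
    have e : β d 1 ↔ r (d - 1) := h6 d 1
    rw [XOne] at hh ⊢
    clear h2a h2b h2c h3 h4 h5 h6 h bEq
    tauto
  have rEq : ∀ {d e : ℤ}, d = e → (r d ↔ r e) := by rintro d e rfl; rfl
  have hstep : ∀ d, r d → r (d + 3) ∧ r (d - 3) ∧ ¬r (d + 1) ∧ ¬r (d + 2) ∧ ¬r (d - 1) ∧ ¬r (d - 2) := by
    intro d hd
    have A := h7 d
    have B := h7 (d + 1)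
    have C := h7 (d - 1)
    have D := h7 (d + 2)
    have E := h7 (d - 2)
    rw [XOne, rEq (show d + 1 - 1 = d by ring), rEq (show d + 1 + 1 = d + 2 by ring)] at B
    rw [XOne, rEq (show d - 1 + 1 = d by ring), rEq (show d - 1 - 1 = d - 2 by ring)] at C
    rw [XOne, rEq (show d + 2 + 1 = d + 3 by ring), rEq (show d + 2 - 1 = d + 1 by ring)] at D
    rw [XOne, rEq (show d - 2 + 1 = d - 1 by ring), rEq (show d - 2 - 1 = d - 3 by ring)] at E
    rw [XOne] at A
    have hn12 : ¬r (d + 1) ∧ ¬r (d - 1) := by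
      rcases A with ⟨_, u, v⟩ | ⟨u, _, _⟩ | ⟨u, _, _⟩
      exacts [⟨u, v⟩, absurd hd u, absurd hd u]
    have hn3 : ¬r (d + 2) := by
      rcases B with ⟨u, _, _⟩ | ⟨_, _, v⟩ | ⟨_, u, _⟩
      exacts [absurd u hn12.1, absurd hd v, u]
    have hn4 : ¬r (d - 2) := by
      rcases C with ⟨u, _, _⟩ | ⟨_, _, v⟩ | ⟨_, u, _⟩
      exacts [absurd u hn12.2, v, absurd hd u]
    have hp3 : r (d + 3) := by
      rcases D with ⟨u, _, _⟩ | ⟨_, v, _⟩ | ⟨_, _, w⟩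
      exacts [absurd u hn3, v, absurd w hn12.1]
    have hp4 : r (d - 3) := by
      rcases E with ⟨u, _, _⟩ | ⟨_, v, _⟩ | ⟨_, _, w⟩
      exacts [absurd u hn4, absurd v hn12.2, w]
    exact ⟨hp3, hp4, hn12.1, hn3, hn12.2, hn4⟩
  have hex : ∃ d0, r d0 := by
    rcases h7 0 with ⟨h0, _, _⟩ | ⟨_, h1, _⟩ | ⟨_, _, h2⟩
    exacts [⟨0, h0⟩, ⟨0 + 1, h1⟩, ⟨0 - 1, h2⟩]
  obtain ⟨d0, hd0⟩ := hex
  have Q : ∀ k : ℤ, r (d0 + 3 * k) ∧ ¬r (d0 + 3 * k + 1) ∧ ¬r (d0 + 3 * k + 2) := by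
    intro k
    induction k using Int.induction_on with
    | zero =>
      have := hstep d0 hd0
      refine ⟨(rEq (show d0 = d0 + 3 * 0 by ring)).mp hd0,
        fun hc => this.2.2.1 ((rEq (show d0 + 3 * 0 + 1 = d0 + 1 by ring)).mp hc),
        fun hc => this.2.2.2.1 ((rEq (show d0 + 3 * 0 + 2 = d0 + 2 by ring)).mp hc)⟩
    | succ n ih =>
      have s1 := hstep _ ih.1
      have hnew : r (d0 + 3 * (n + 1)) := (rEq (show d0 + 3 * n + 3 = d0 + 3 * (n+1) by ring)).mp s1.1
      have s2 := hstep _ hnew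
      exact ⟨hnew, s2.2.2.1, s2.2.2.2.1⟩
    | pred n ih =>
      have s1 := hstep _ ih.1
      have hnew : r (d0 + 3 * (-n - 1)) :=
        (rEq (show d0 + 3 * (-n) - 3 = d0 + 3 * (-n - 1) by ring)).mp s1.2.1
      have s2 := hstep _ hnew
      exact ⟨hnew, s2.2.2.1, s2.2.2.2.1⟩
  refine ⟨d0, ?_⟩
  intro p q
  rw [h6]
  set D := p - q with hD
  obtain ⟨k, m, hm0, hm2, hDe⟩ : ∃ k m : ℤ, 0 ≤ m ∧ m < 3 ∧ D = d0 + 3 * k + m := by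
    refine ⟨(D - d0) / 3, (D - d0) % 3, ?_, ?_, ?_⟩ <;> omega
  interval_cases m
  · exact iff_of_true ((rEq (show d0 + 3 * k + 0 = d0 + 3 * k by ring)).mpr (Q k).1 |> fun hh => by
      rwa [rEq hDe]) (by omega)
  · refine iff_of_false (fun hc => (Q k).2.1 ?_) (by omega)
    rwa [rEq hDe] at hc
  · refine iff_of_false (fun hc => (Q k).2.2 ?_) (by omega)
    rwa [rEq hDe] at hc

lemma classify' (α : ℤ → ℤ → Prop)
    (h : ∀ p q : ℤ, XOne (α p q) (α (p - 1) q) (α p (q - 1))) :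
    ∃ c : ℤ, ∀ p q : ℤ, α p q ↔ (p - q) % 3 = c % 3 := by
  have aEq : ∀ {p q p' q' : ℤ}, p = p' → q = q' → (α p q ↔ α p' q') := by
    rintro p q p' q' rfl rfl; rfl
  obtain ⟨c, hc⟩ := classify (fun p q => α (-p) (-q)) (by
    intro p q
    have hh := h (-p) (-q)
    rw [XOne, aEq (show -p - 1 = -(p+1) by ring) rfl, aEq rfl (show -q - 1 = -(q+1) by ring)] at hh
    exact hh)
  refine ⟨-c, ?_⟩
  intro p q
  have := hc (-p) (-q)
  rw [aEq (show -(-p) = p by ring) (show -(-q) = q by ring)] at this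
  rw [this]
  omega


lemma matE : ∀ (t jj : Fin 2), (!![1,2;1,2] : Matrix (Fin 2) (Fin 2) ℕ) t jj
    = if jj = 0 then 1 else 2 := by intro t jj; fin_cases t <;> fin_cases jj <;> rfl

lemma mgm0f (p q : ℤ) : (⟨p,q,false⟩ : Mg) * mgen 0 = ⟨p, q, true⟩ := by
  ext <;> simp [Mg.mul_def, Mg.sgn, mgen]
lemma mgm0t (p q : ℤ) : (⟨p,q,true⟩ : Mg) * mgen 0 = ⟨p, q, false⟩ := by
  ext <;> simp [Mg.mul_def, Mg.sgn, mgen]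
lemma mgm1f (p q : ℤ) : (⟨p,q,false⟩ : Mg) * mgen 1 = ⟨p + 1, q, true⟩ := by
  ext <;> simp [Mg.mul_def, Mg.sgn, mgen]
lemma mgm1t (p q : ℤ) : (⟨p,q,true⟩ : Mg) * mgen 1 = ⟨p - 1, q, false⟩ := by
  ext <;> simp [Mg.mul_def, Mg.sgn, mgen] <;> ring
lemma mgm2f (p q : ℤ) : (⟨p,q,false⟩ : Mg) * mgen 2 = ⟨p, q + 1, true⟩ := by
  ext <;> simp [Mg.mul_def, Mg.sgn, mgen]
lemma mgm2t (p q : ℤ) : (⟨p,q,true⟩ : Mg) * mgen 2 = ⟨p, q - 1, false⟩ := by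
  ext <;> simp [Mg.mul_def, Mg.sgn, mgen] <;> ring

lemma perfect_xone {ψ : G → Fin 2} (hψ : IsPerfectColoring ψ !![1,2;1,2]) (u : G) :
    XOne (ψ (u * gen 0) = 0) (ψ (u * gen 1) = 0) (ψ (u * gen 2) = 0) := by
  have hh := hψ u 0
  rw [card_nbrs, matE] at hh
  norm_num at hh
  by_cases a : ψ (u * gen 0) = 0 <;> by_cases b : ψ (u * gen 1) = 0 <;>
    by_cases c : ψ (u * gen 2) = 0 <;>
    simp only [a, b, c, if_true, if_false, ite_true, ite_false] at hh <;>
    simp [XOne, a, b, c] <;> omega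

lemma col_sec (c c' : ℤ) (m : Mg) :
    col c c' (sec m) = if (m.p - m.q) % 3 = (if m.s then c else c') % 3 then 0 else 1 := by
  simp [col, f_sec]

lemma fin2_ne (t : Fin 2) (h : ¬ t = 0) : t = 1 := by omega

lemma coloring_is_col {ψ : G → Fin 2} (hψ : IsPerfectColoring ψ !![1,2;1,2]) :
    ∃ c c' : ℤ, ψ = col c c' := by
  obtain ⟨c, hc⟩ := classify (fun p q => ψ (sec ⟨p, q, true⟩) = 0) (by
    intro p q
    have hx := perfect_xone hψ (sec ⟨p, q, false⟩)
    rw [← sec_mul_gen, ← sec_mul_gen, ← sec_mul_gen, mgm0f, mgm1f, mgm2f] at hx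
    exact hx)
  obtain ⟨c', hc'⟩ := classify' (fun p q => ψ (sec ⟨p, q, false⟩) = 0) (by
    intro p q
    have hx := perfect_xone hψ (sec ⟨p, q, true⟩)
    rw [← sec_mul_gen, ← sec_mul_gen, ← sec_mul_gen, mgm0t, mgm1t, mgm2t] at hx
    exact hx)
  refine ⟨c, c', ?_⟩
  funext g
  rcases hm : fhom g with ⟨p, q, s⟩
  have hg : g = sec ⟨p, q, s⟩ := by rw [← hm, sec_f]
  rw [hg, col_sec]
  cases s
  · simp only [if_false, Bool.false_eq_true]
    by_cases hcond : (p - q) % 3 = c' % 3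
    · rw [if_pos hcond]
      exact (hc' p q).mpr hcond
    · rw [if_neg hcond]
      exact fin2_ne _ (fun h0 => hcond ((hc' p q).mp h0))
  · simp only [if_true]
    by_cases hcond : (p - q) % 3 = c % 3
    · rw [if_pos hcond]
      exact (hc p q).mpr hcond
    · rw [if_neg hcond]
      exact fin2_ne _ (fun h0 => hcond ((hc p q).mp h0))


def transIso (h : G) : H ≃g H :=
  ⟨Equiv.mulLeft h, by
    intro u v
    show H.Adj (h * u) (h * v) ↔ H.Adj u v
    constructor
    · rintro ⟨hne, i, he⟩
      refine ⟨fun hh => hne (by rw [hh]), i, ?_⟩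
      rw [mul_assoc] at he
      exact mul_left_cancel he
    · rintro ⟨hne, i, rfl⟩
      exact ⟨fun hh => hne (mul_left_cancel hh), i, by rw [mul_assoc]⟩⟩

lemma yzx_sq : (gen 1 * gen 2 * gen 0) * (gen 1 * gen 2 * gen 0) = 1 := by
  have hw : (gen 0)⁻¹ * (gen 0 * gen 1 * gen 2) * gen 0 = gen 1 * gen 2 * gen 0 := by group
  calc (gen 1 * gen 2 * gen 0) * (gen 1 * gen 2 * gen 0)
      = ((gen 0)⁻¹ * (gen 0 * gen 1 * gen 2) * gen 0) *
        ((gen 0)⁻¹ * (gen 0 * gen 1 * gen 2) * gen 0) := by rw [hw]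
    _ = (gen 0)⁻¹ * ((gen 0 * gen 1 * gen 2) * (gen 0 * gen 1 * gen 2)) * gen 0 := by group
    _ = 1 := by rw [xyz_sq]; group

lemma srel : ∀ r ∈ hexRels, FreeGroup.lift (fun i : Fin 3 => gen (i + 1)) r = 1 := by
  intro r hr
  rcases hr with h | h | h | h <;> subst h <;>
    simp only [map_mul, FreeGroup.lift_apply_of]
  · exact gen_mul_self 1
  · exact gen_mul_self 2
  · exact gen_mul_self 0
  · exact yzx_sq

lemma trel : ∀ r ∈ hexRels, FreeGroup.lift (fun i : Fin 3 => gen (i + 2)) r = 1 := by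
  intro r hr
  rcases hr with h | h | h | h <;> subst h <;>
    simp only [map_mul, FreeGroup.lift_apply_of]
  · exact gen_mul_self 2
  · exact gen_mul_self 0
  · exact gen_mul_self 1
  · exact zxy_sq

def sigmaH : G →* G := PresentedGroup.toGroup srel
def tauH : G →* G := PresentedGroup.toGroup trel

lemma sigma_gen (i : Fin 3) : sigmaH (gen i) = gen (i + 1) := PresentedGroup.toGroup.of srel
lemma tau_gen (i : Fin 3) : tauH (gen i) = gen (i + 2) := PresentedGroup.toGroup.of trel

lemma tau_sigma (g : G) : tauH (sigmaH g) = g := by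
  induction g using PresentedGroup.induction_on with
  | _ w =>
    induction w using FreeGroup.induction_on with
    | C1 => simp
    | of i =>
      rw [show (PresentedGroup.mk hexRels (FreeGroup.of i)) = gen i from rfl, sigma_gen, tau_gen]
      congr 1
      fin_cases i <;> rfl
    | inv_of i ih => simp only [map_inv]; rw [ih]
    | mul w1 w2 ih1 ih2 => rw [map_mul, map_mul, map_mul, ih1, ih2]

lemma sigma_tau (g : G) : sigmaH (tauH g) = g := by
  induction g using PresentedGroup.induction_on with
  | _ w =>
    induction w using FreeGroup.induction_on with
    | C1 => simp
    | of i =>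
      rw [show (PresentedGroup.mk hexRels (FreeGroup.of i)) = gen i from rfl, tau_gen, sigma_gen]
      congr 1
      fin_cases i <;> rfl
    | inv_of i ih => simp only [map_inv]; rw [ih]
    | mul w1 w2 ih1 ih2 => rw [map_mul, map_mul, map_mul, ih1, ih2]

def rhoE : G ≃* G :=
  { toFun := sigmaH, invFun := tauH, left_inv := tau_sigma, right_inv := sigma_tau,
    map_mul' := map_mul sigmaH }

lemma fin3_cyc (i : Fin 3) : i + 2 + 1 = i := by fin_cases i <;> rfl

def rhoIso : H ≃g H :=
  ⟨rhoE.toEquiv, by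
    intro u v
    show H.Adj (sigmaH u) (sigmaH v) ↔ H.Adj u v
    constructor
    · rintro ⟨hne, i, he⟩
      refine ⟨fun hh => hne (by rw [hh]), i + 2, ?_⟩
      apply rhoE.injective
      show sigmaH v = sigmaH _
      rw [he, map_mul, sigma_gen, fin3_cyc]
    · rintro ⟨hne, i, rfl⟩
      exact ⟨fun hh => hne (rhoE.injective hh), i + 1, by rw [map_mul, sigma_gen]⟩⟩

lemma f_sigma_aG : fhom (sigmaH aG) = ⟨-1, 1, false⟩ := by
  show fhom (sigmaH (gen 1 * gen 0)) = _
  rw [map_mul, map_mul, sigma_gen, sigma_gen, f_gen, f_gen]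
  decide

lemma f_sigma_bG : fhom (sigmaH bG) = ⟨-1, 0, false⟩ := by
  show fhom (sigmaH (gen 2 * gen 0)) = _
  rw [map_mul, map_mul, sigma_gen, sigma_gen, f_gen, f_gen]
  decide

lemma f_sigma_x : fhom (sigmaH (gen 0)) = mgen 1 := by
  rw [sigma_gen, f_gen]; decide

lemma f_sigma_sec_f (p q : ℤ) : fhom (sigmaH (sec ⟨p, q, false⟩)) = ⟨-p-q, p, false⟩ := by
  show fhom (sigmaH (aG ^ p * bG ^ q * (if false then gen 0 else 1))) = _
  rw [if_neg (by simp), mul_one, map_mul, map_mul, map_zpow, map_zpow, map_zpow, map_zpow,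
    f_sigma_aG, f_sigma_bG, mg_pow, mg_pow]
  ext <;> simp [Mg.mul_def, Mg.sgn] <;> ring

lemma f_sigma_sec_t (p q : ℤ) : fhom (sigmaH (sec ⟨p, q, true⟩)) = ⟨-p-q+1, p, true⟩ := by
  show fhom (sigmaH (aG ^ p * bG ^ q * (if true then gen 0 else 1))) = _
  rw [if_pos (by simp), map_mul, map_mul, map_mul, map_mul, map_zpow, map_zpow,
    map_zpow, map_zpow, f_sigma_aG, f_sigma_bG, f_sigma_x, mg_pow, mg_pow]
  ext <;> simp [Mg.mul_def, Mg.sgn, mgen] <;> ring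

lemma col_bmul (c c' : ℤ) (v : G) : col c c' (bG * v) = col (c + 1) (c' + 1) v := by
  rcases hv : fhom v with ⟨p, q, s⟩
  have hb : fhom (bG * v) = ⟨p, 1 + q, s⟩ := by
    rw [map_mul, f_bG, hv]; ext <;> simp [Mg.mul_def, Mg.sgn]
  simp only [col, hb, hv]
  cases s <;> exact if_congr (by simp; omega) rfl rfl

lemma col_rho (c c' : ℤ) (v : G) : col c c' (sigmaH v) = col (c - 1) c' v := by
  rcases hm : fhom v with ⟨p, q, s⟩
  have hg : v = sec ⟨p, q, s⟩ := by rw [← hm, sec_f]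
  rw [hg]
  cases s
  · simp only [col, f_sigma_sec_f, f_sec]
    exact if_congr (by simp; omega) rfl rfl
  · simp only [col, f_sigma_sec_t, f_sec]
    exact if_congr (by simp; omega) rfl rfl

lemma equiv_refl (φ : G → Fin 2) : EquivColoring φ φ :=
  ⟨RelIso.refl _, funext fun _ => rfl⟩

lemma equiv_trans {φ ψ χ : G → Fin 2} (h1 : EquivColoring φ ψ) (h2 : EquivColoring ψ χ) :
    EquivColoring φ χ := by
  obtain ⟨g1, rfl⟩ := h1
  obtain ⟨g2, rfl⟩ := h2
  exact ⟨g2.trans g1, funext fun v => rfl⟩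

lemma equiv_symm {φ ψ : G → Fin 2} (h : EquivColoring φ ψ) : EquivColoring ψ φ := by
  obtain ⟨g, rfl⟩ := h
  refine ⟨g.symm, funext fun v => ?_⟩
  show φ v = φ (g (g.symm v))
  rw [RelIso.apply_symm_apply]

lemma equiv_b (c c' : ℤ) : EquivColoring (col c c') (col (c + 1) (c' + 1)) :=
  ⟨transIso bG, funext fun v => (col_bmul c c' v).symm⟩

lemma equiv_rho (c c' : ℤ) : EquivColoring (col c c') (col (c - 1) c') :=
  ⟨rhoIso, funext fun v => (col_rho c c' v).symm⟩

lemma col_congr {c c' d d' : ℤ} (h1 : c % 3 = d % 3) (h2 : c' % 3 = d' % 3) :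
    col c c' = col d d' := by
  funext g
  rcases hm : fhom g with ⟨p, q, s⟩
  simp only [col, hm]
  cases s <;> exact if_congr (by simp; omega) rfl rfl

lemma master (c c' : ℤ) : EquivColoring (col 0 0) (col c c') := by
  have up : ∀ n : ℕ, EquivColoring (col 0 0) (col (n : ℤ) (n : ℤ)) := by
    intro n
    induction n with
    | zero => push_cast; exact equiv_refl _
    | succ k ih =>
      have := equiv_trans ih (equiv_b k k)
      push_cast
      exact this
  have down : ∀ (n : ℕ) (a a' : ℤ), EquivColoring (col a a') (col (a - n) a') := by
    intro n
    induction n with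
    | zero => intro a a'; push_cast; rw [sub_zero]; exact equiv_refl _
    | succ k ih =>
      intro a a'
      have := equiv_trans (ih a a') (equiv_rho (a - k) a')
      rw [show a - (k + 1 : ℕ) = a - k - 1 by push_cast; ring]
      exact this
  set n1 : ℕ := (c' % 3).toNat with hn1
  set m1 : ℕ := (((n1 : ℤ) - c) % 3).toNat with hm1
  have hn1' : (n1 : ℤ) = c' % 3 := Int.toNat_of_nonneg (by omega)
  have hm1' : (m1 : ℤ) = ((n1 : ℤ) - c) % 3 := Int.toNat_of_nonneg (by omega)
  have key := equiv_trans (up n1) (down m1 n1 n1)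
  rw [col_congr (show ((n1 : ℤ) - m1) % 3 = c % 3 by omega)
    (show (n1 : ℤ) % 3 = c' % 3 by omega)] at key
  exact key

/-- There is a perfect coloring of `H` with parameter matrix `[[1,2],[1,2]]`, and it is
unique up to equivalence. -/
theorem coloring_12_12 :
    (∃ φ : G → Fin 2, IsPerfectColoring φ !![1,2;1,2]) ∧
    ∀ φ ψ : G → Fin 2, IsPerfectColoring φ !![1,2;1,2] → IsPerfectColoring ψ !![1,2;1,2] →
      EquivColoring φ ψ := by
  constructor
  · exact ⟨col 0 0, exist_perfect⟩
  · intro φ ψ hφ hψ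
    obtain ⟨a, a', ha⟩ := coloring_is_col hφ
    obtain ⟨b, b', hb⟩ := coloring_is_col hψ
    subst ha hb
    exact equiv_trans (equiv_symm (master a a')) (master b b')

end HexGrid
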